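/- Let T be a convex-cyclic operator on a real or complex locally convex space X and let c > 1 be a real number. Then cT is convex-cyclic; moreover, every convex-cyclic vector for T is also a convex-cyclic vector for cT. -/

import Mathlib

lemma convexCyclic_aux
    {𝕜 : Type*} [RCLike 𝕜] {X : Type*} [AddCommGroup X] [Module 𝕜 X] [Module ℝ X]
    [IsScalarTower ℝ 𝕜 X] [TopologicalSpace X] [IsTopologicalAddGroup X]
    [ContinuousSMul 𝕜 X] [ContinuousSMul ℝ X] [LocallyConvexSpace ℝ X]
    (T : X →L[𝕜] X) (c : ℝ) (hc : 1 < c) (x : X)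
    (hx : Dense (convexHull ℝ (Set.range fun n : ℕ => (T ^ n) x))) :
    Dense (convexHull ℝ (Set.range fun n : ℕ => (((c : 𝕜) • T) ^ n) x)) := by
  by_contra h
  rw [Dense] at h
  push_neg at h
  obtain ⟨y, hy⟩ := h
  set S₂ : Set X := Set.range fun n : ℕ => (((c : 𝕜) • T) ^ n) x with hS₂
  obtain ⟨f, u, hfu, hyu⟩ :=
    geometric_hahn_banach_closed_point ((convex_convexHull ℝ S₂).closure) isClosed_closure hy
  -- `x` itself lies in the closed set
  have hxC : x ∈ closure (convexHull ℝ S₂) :=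
    subset_closure (subset_convexHull ℝ S₂ ⟨0, by simp⟩)
  have hfx : f x < u := hfu x hxC
  set M : ℝ := max u 0 with hM
  -- orbit computation
  have horb : ∀ n : ℕ, (((c : 𝕜) • T) ^ n) x = (c ^ n : ℝ) • (T ^ n) x := by
    intro n
    have : ((c : 𝕜) • T) ^ n = ((c : 𝕜) ^ n) • T ^ n := smul_pow _ _ _
    rw [this]
    have : ((c : 𝕜) ^ n) = ((c ^ n : ℝ) : 𝕜) := by push_cast; ring
    rw [ContinuousLinearMap.smul_apply, this, ← algebraMap_smul 𝕜 (c ^ n : ℝ) ((T ^ n) x)]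
  -- bound on the orbit of T
  have hbound : (Set.range fun n : ℕ => (T ^ n) x) ⊆ f ⁻¹' Set.Iic M := by
    rintro _ ⟨n, rfl⟩
    have h1 : f ((((c : 𝕜) • T) ^ n) x) < u :=
      hfu _ (subset_closure (subset_convexHull ℝ S₂ ⟨n, rfl⟩))
    rw [horb n, map_smul, smul_eq_mul] at h1
    have hcn : (1 : ℝ) ≤ c ^ n := one_le_pow₀ hc.le
    simp only [Set.mem_preimage, Set.mem_Iic, hM, le_max_iff]
    rcases le_or_gt (f ((T ^ n) x)) 0 with h0 | h0
    · exact Or.inr h0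
    · left; nlinarith
  -- hence f is bounded above everywhere
  have hall : ∀ z : X, f z ≤ M := by
    intro z
    have hsub : convexHull ℝ (Set.range fun n : ℕ => (T ^ n) x) ⊆ f ⁻¹' Set.Iic M :=
      convexHull_min hbound ((convex_Iic M).linear_preimage (f : X →ₗ[ℝ] ℝ))
    have hz : z ∈ closure (convexHull ℝ (Set.range fun n : ℕ => (T ^ n) x)) := hx z
    have := closure_minimal hsub ((isClosed_Iic).preimage f.continuous) hz
    exact this
  -- contradiction: f takes arbitrarily large values
  have hd : 0 < f y - f x := by linarith
  have := hall (((M + 1 - f x) / (f y - f x)) • (y - x) + x)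
  rw [map_add, map_smul, map_sub, smul_eq_mul, div_mul_cancel₀ _ hd.ne'] at this
  have hMu : u ≤ M := le_max_left _ _
  linarith

/-- If `T` is a convex-cyclic operator on a (real or complex) locally convex space `X` and
`c > 1` is real, then `cT` is convex-cyclic; moreover every convex-cyclic vector for `T`
is a convex-cyclic vector for `cT`. -/
theorem smul_convexCyclic_of_convexCyclic
    {𝕜 : Type*} [RCLike 𝕜] {X : Type*} [AddCommGroup X] [Module 𝕜 X] [Module ℝ X]
    [IsScalarTower ℝ 𝕜 X] [TopologicalSpace X] [IsTopologicalAddGroup X]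
    [ContinuousSMul 𝕜 X] [ContinuousSMul ℝ X] [LocallyConvexSpace ℝ X]
    (T : X →L[𝕜] X) (c : ℝ) (hc : 1 < c)
    (hT : ∃ x : X, Dense (convexHull ℝ (Set.range fun n : ℕ => (T ^ n) x))) :
    (∃ x : X, Dense (convexHull ℝ (Set.range fun n : ℕ => (((c : 𝕜) • T) ^ n) x))) ∧
    ∀ x : X, Dense (convexHull ℝ (Set.range fun n : ℕ => (T ^ n) x)) →
      Dense (convexHull ℝ (Set.range fun n : ℕ => (((c : 𝕜) • T) ^ n) x)) := by
  exact ⟨hT.imp fun x hx => convexCyclic_aux T c hc x hx,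
    fun x hx => convexCyclic_aux T c hc x hx⟩
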